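/- Let p be a prime and let CM(G, X, q) be a p-valent regular Cayley map on a finite abelian group G. Then CM(G, X, q) is either balanced or anti-balanced. -/

import Mathlib

namespace CMAux

open Finset Polynomial

variable {p : ℕ} [Fact (Nat.Prime p)]

/-- The forward difference operator on functions `ZMod p → ZMod p`. -/
noncomputable def Dl (p : ℕ) : Module.End (ZMod p) ((ZMod p) → ZMod p) where
  toFun f := fun k => f (k + 1) - f k
  map_add' f g := by funext k; simp only [Pi.add_apply]; ring
  map_smul' c f := by funext k; simp only [Pi.smul_apply, smul_eq_mul, RingHom.id_apply]; ring

lemma Dl_apply (f : ZMod p → ZMod p) (k : ZMod p) : Dl p f k = f (k + 1) - f k := rfl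

lemma Dl_pow_succ (m : ℕ) (f : ZMod p → ZMod p) :
    (Dl p ^ (m + 1)) f = Dl p ((Dl p ^ m) f) := by
  rw [pow_succ']; rfl

lemma Dl_pow_succ' (m : ℕ) (f : ZMod p → ZMod p) :
    (Dl p ^ (m + 1)) f = (Dl p ^ m) (Dl p f) := by
  rw [pow_succ]; rfl

lemma Dl_pow_apply_succ (m : ℕ) (f : ZMod p → ZMod p) (k : ZMod p) :
    (Dl p ^ m) f (k + 1) = (Dl p ^ m) f k + (Dl p ^ (m + 1)) f k := by
  rw [Dl_pow_succ m f]
  simp [Dl_apply]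

lemma pascal_sum (a : ℕ → ZMod p) (m : ℕ) :
    ∑ j ∈ range (m + 1), (Nat.choose m j : ZMod p) * (a j + a (j + 1)) =
    ∑ j ∈ range (m + 2), (Nat.choose (m + 1) j : ZMod p) * a j := by
  have h1 : ∑ j ∈ range (m + 2), (Nat.choose (m + 1) j : ZMod p) * a j
      = (∑ i ∈ range (m + 1), (Nat.choose (m + 1) (i + 1) : ZMod p) * a (i + 1))
        + (Nat.choose (m + 1) 0 : ZMod p) * a 0 :=
    Finset.sum_range_succ' _ _
  have h2 : ∀ i, (Nat.choose (m + 1) (i + 1) : ZMod p) = (Nat.choose m i : ZMod p)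
      + (Nat.choose m (i + 1) : ZMod p) := by
    intro i; rw [Nat.choose_succ_succ]; push_cast; ring
  have h3 : ∑ i ∈ range (m + 1), (Nat.choose m (i + 1) : ZMod p) * a (i + 1)
      = ∑ j ∈ range (m + 1), (Nat.choose m j : ZMod p) * a j
        - (Nat.choose m 0 : ZMod p) * a 0 := by
    have h4 : ∑ j ∈ range (m + 2), (Nat.choose m j : ZMod p) * a j
        = (∑ i ∈ range (m + 1), (Nat.choose m (i + 1) : ZMod p) * a (i + 1))
          + (Nat.choose m 0 : ZMod p) * a 0 := Finset.sum_range_succ' _ _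
    have h5 : ∑ j ∈ range (m + 2), (Nat.choose m j : ZMod p) * a j
        = ∑ j ∈ range (m + 1), (Nat.choose m j : ZMod p) * a j := by
      rw [Finset.sum_range_succ, Nat.choose_succ_self]
      simp
    rw [h5] at h4
    linear_combination -h4
  rw [h1]
  simp only [h2, add_mul]
  rw [Finset.sum_add_distrib, h3]
  simp only [Nat.choose_zero_right, Nat.cast_one, one_mul, mul_add]
  rw [Finset.sum_add_distrib]
  ring

lemma shift_eq_sum_choose (f : ZMod p → ZMod p) (m : ℕ) (k : ZMod p) :
    f (k + (m : ZMod p)) = ∑ j ∈ range (m + 1), (Nat.choose m j : ZMod p) * ((Dl p ^ j) f k) := by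
  induction m generalizing k with
  | zero => simp
  | succ m ih =>
    have h1 : k + ((m + 1 : ℕ) : ZMod p) = (k + 1) + (m : ZMod p) := by push_cast; ring
    rw [h1, ih (k + 1)]
    have h2 : ∀ j ∈ range (m + 1), (Nat.choose m j : ZMod p) * ((Dl p ^ j) f (k + 1))
        = (Nat.choose m j : ZMod p) * ((Dl p ^ j) f k + (Dl p ^ (j + 1)) f k) := by
      intro j _; rw [Dl_pow_apply_succ]
    rw [Finset.sum_congr rfl h2, pascal_sum (fun j => (Dl p ^ j) f k) m]

lemma Dl_pow_p (f : ZMod p → ZMod p) : (Dl p ^ p) f = 0 := by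
  have hp : Nat.Prime p := Fact.out
  funext k
  have h := shift_eq_sum_choose f p k
  rw [ZMod.natCast_self, add_zero, Finset.sum_range_succ, Nat.choose_self] at h
  have h0 : ∑ j ∈ range p, (Nat.choose p j : ZMod p) * ((Dl p ^ j) f k) = f k := by
    rw [Finset.sum_eq_single 0]
    · simp
    · intro j hj hj0
      have : (Nat.choose p j : ZMod p) = 0 := by
        rw [ZMod.natCast_eq_zero_iff]
        exact Nat.Prime.dvd_choose_self hp hj0 (Finset.mem_range.mp hj)
      rw [this, zero_mul]
    · intro h; exact absurd (Finset.mem_range.mpr hp.pos) h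
  rw [h0, Nat.cast_one, one_mul] at h
  have : f k = f k + (Dl p ^ p) f k := by linear_combination h
  simpa using this.symm

lemma Dl_pow_eq_zero_of_le {f : ZMod p → ZMod p} {m : ℕ} (hf : (Dl p ^ m) f = 0)
    {j : ℕ} (hj : m ≤ j) : (Dl p ^ j) f = 0 := by
  obtain ⟨t, rfl⟩ := Nat.exists_eq_add_of_le hj
  rw [add_comm, pow_add, Module.End.mul_apply, hf, map_zero]

/-- Newton's forward-difference series. -/
lemma newton (f : ZMod p → ZMod p) (m : ℕ) (hf : (Dl p ^ m) f = 0) (x : ZMod p) :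
    f x = ∑ j ∈ range m, ((Dl p ^ j) f 0) * (Nat.choose x.val j : ZMod p) := by
  have hx : ((x.val : ℕ) : ZMod p) = x := ZMod.natCast_rightInverse x
  have h := shift_eq_sum_choose f x.val 0
  rw [zero_add, hx] at h
  set N := max m (x.val + 1) with hN
  have hsub1 : ∑ j ∈ range (x.val + 1), (Nat.choose x.val j : ZMod p) * ((Dl p ^ j) f 0)
      = ∑ j ∈ range N, (Nat.choose x.val j : ZMod p) * ((Dl p ^ j) f 0) := by
    apply Finset.sum_subset
    · exact Finset.range_subset_range.mpr (le_max_right _ _)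
    · intro j _ hj
      have : x.val < j := by
        have := Finset.mem_range.not.mp hj
        omega
      rw [Nat.choose_eq_zero_of_lt this]
      simp
  have hsub2 : ∑ j ∈ range m, ((Dl p ^ j) f 0) * (Nat.choose x.val j : ZMod p)
      = ∑ j ∈ range N, ((Dl p ^ j) f 0) * (Nat.choose x.val j : ZMod p) := by
    apply Finset.sum_subset
    · exact Finset.range_subset_range.mpr (le_max_left _ _)
    · intro j _ hj
      have hmj : m ≤ j := by
        have := Finset.mem_range.not.mp hj
        omega
      rw [Dl_pow_eq_zero_of_le hf hmj]
      simp
  rw [h, hsub1, hsub2]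
  apply Finset.sum_congr rfl
  intro j _; ring

lemma Dl_pow_monomial {j m : ℕ} (hj : j < m) :
    (Dl p ^ m) (fun x : ZMod p => x ^ j) = 0 := by
  induction j using Nat.strong_induction_on generalizing m with
  | _ j ih =>
    obtain ⟨m, rfl⟩ : ∃ m', m = m' + 1 := ⟨m - 1, by omega⟩
    rw [Dl_pow_succ']
    have hD : Dl p (fun x : ZMod p => x ^ j)
        = ∑ i ∈ range j, (Nat.choose j i : ZMod p) • (fun x : ZMod p => x ^ i) := by
      funext x
      rw [Dl_apply, Finset.sum_apply]
      have hb : (x + 1) ^ j = ∑ i ∈ range (j + 1), x ^ i * 1 ^ (j - i) * (Nat.choose j i : ZMod p) :=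
        add_pow x 1 j
      rw [hb, Finset.sum_range_succ]
      have hc : ∀ i ∈ range j, x ^ i * 1 ^ (j - i) * (Nat.choose j i : ZMod p)
          = (Nat.choose j i : ZMod p) * x ^ i := by intro i _; ring
      rw [Finset.sum_congr rfl hc]
      simp only [Nat.choose_self, Nat.cast_one, one_pow, mul_one, one_mul, Nat.sub_self,
        Pi.smul_apply, smul_eq_mul]
      ring
    rw [hD, map_sum]
    apply Finset.sum_eq_zero
    intro i hi
    rw [map_smul]
    have : (Dl p ^ m) (fun x : ZMod p => x ^ i) = 0 :=
      ih i (Finset.mem_range.mp hi) (by have := Finset.mem_range.mp hi; omega)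
    rw [this, smul_zero]

lemma Dl_pow_poly (f : Polynomial (ZMod p)) {m : ℕ} (hm : f.natDegree < m) :
    (Dl p ^ m) (fun x => f.eval x) = 0 := by
  have hrep : (fun x => f.eval x)
      = ∑ i ∈ range (f.natDegree + 1), (f.coeff i) • (fun x : ZMod p => x ^ i) := by
    funext x
    rw [Finset.sum_apply]
    rw [Polynomial.eval_eq_sum_range]
    simp [smul_eq_mul]
  rw [hrep, map_sum]
  apply Finset.sum_eq_zero
  intro i hi
  rw [map_smul, Dl_pow_monomial (lt_of_lt_of_le (Finset.mem_range.mp hi) (by omega)), smul_zero]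

/-- Binomial coefficient polynomial `C(x, j)`. -/
noncomputable def Bpoly (p : ℕ) (j : ℕ) : Polynomial (ZMod p) :=
  Polynomial.C ((j.factorial : ZMod p)⁻¹) * ∏ i ∈ range j, (Polynomial.X - Polynomial.C (i : ZMod p))

lemma Bpoly_natDegree_le (j : ℕ) : (Bpoly p j).natDegree ≤ j := by
  refine le_trans (Polynomial.natDegree_mul_le) ?_
  rw [Polynomial.natDegree_C, zero_add]
  refine le_trans (Polynomial.natDegree_prod_le _ _) ?_
  have : ∀ i ∈ range j, (Polynomial.X - Polynomial.C (i : ZMod p)).natDegree = 1 := by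
    intro i _; exact Polynomial.natDegree_X_sub_C _
  rw [Finset.sum_congr rfl this]
  simp

lemma Bpoly_eval (j : ℕ) (hj : j < p) (x : ZMod p) :
    (Bpoly p j).eval x = (Nat.choose x.val j : ZMod p) := by
  have hp : Nat.Prime p := Fact.out
  have hfac : ((j.factorial : ZMod p)) ≠ 0 := by
    rw [Ne, ZMod.natCast_eq_zero_iff]
    intro hdvd
    exact absurd ((Nat.Prime.dvd_factorial hp).mp hdvd) (by omega)
  have key : ∏ i ∈ range j, (x - (i : ZMod p)) = ((Nat.descFactorial x.val j : ℕ) : ZMod p) := by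
    rcases le_or_gt j x.val with hle | hlt
    · rw [Nat.descFactorial_eq_prod_range]
      push_cast [Nat.cast_prod]
      apply Finset.prod_congr rfl
      intro i hi
      have hix : i ≤ x.val := le_trans (le_of_lt (Finset.mem_range.mp hi)) hle
      rw [Nat.cast_sub hix, ZMod.natCast_rightInverse x]
    · have h0 : ((Nat.descFactorial x.val j : ℕ) : ZMod p) = 0 := by
        rw [Nat.descFactorial_eq_zero_iff_lt.mpr hlt]; simp
      rw [h0]
      apply Finset.prod_eq_zero (Finset.mem_range.mpr hlt)
      rw [← ZMod.natCast_rightInverse x]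
      simp
  rw [Bpoly]
  rw [Polynomial.eval_mul, Polynomial.eval_C, Polynomial.eval_prod]
  simp only [Polynomial.eval_sub, Polynomial.eval_X, Polynomial.eval_C]
  rw [key, Nat.descFactorial_eq_factorial_mul_choose]
  push_cast
  field_simp


lemma prime_card_zmod : Fintype.card (ZMod p) = p := ZMod.card p

/-- Main combinatorial core: the difference function of `σ` is constant. -/
theorem delta_const
    (σ : ZMod p → ZMod p) (hσ : ∀ x, σ (σ x) = x)
    (Ω : Finset (ZMod p)) (h1 : (1 : ZMod p) ∈ Ω) (h0 : (0 : ZMod p) ∉ Ω)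
    (hδ : ∀ k, σ (k + 1) - σ k ∈ Ω)
    (hcl : ∀ k : ZMod p, ∀ c ∈ Ω, σ (k + c) - σ k ∈ Ω)
    (hpair : ∀ a b : ZMod p, σ (a + 1) - σ a = σ (b + 1) - σ b →
        ∀ c ∈ Ω, σ (a + c) - σ a = σ (b + c) - σ b) :
    ∀ k, σ (k + 1) - σ k = σ (0 + 1) - σ 0 := by
  have hp : Nat.Prime p := Fact.out
  haveI : NeZero p := ⟨hp.ne_zero⟩
  set δ : ZMod p → ZMod p := fun k => σ (k + 1) - σ k with hδdef
  -- basic facts about Ω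
  set n : ℕ := Ω.card with hn
  have hn1 : 1 ≤ n := Finset.card_pos.mpr ⟨1, h1⟩
  have hnp : n < p := by
    have hsub : Ω ⊆ Finset.univ.erase (0 : ZMod p) := by
      intro x hx
      refine Finset.mem_erase.mpr ⟨?_, Finset.mem_univ x⟩
      rintro rfl; exact h0 hx
    have := Finset.card_le_card hsub
    rw [Finset.card_erase_of_mem (Finset.mem_univ _), Finset.card_univ, prime_card_zmod] at this
    omega
  have hnz : (n : ZMod p) ≠ 0 := by
    rw [Ne, ZMod.natCast_eq_zero_iff]
    intro hdvd
    have := Nat.le_of_dvd (by omega) hdvd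
    omega
  -- (N) : ∑_{c ∈ Ω} δ (k + c) = n • δ k
  have hsum_perm : ∀ k : ZMod p, ∑ c ∈ Ω, (σ (k + c) - σ k) = ∑ c ∈ Ω, c := by
    intro k
    apply Finset.sum_nbij' (i := fun c => σ (k + c) - σ k) (j := fun c => σ (σ k + c) - σ (σ k))
    · intro c hc; exact hcl k c hc
    · intro c hc
      exact hcl (σ k) c hc
    · intro c _
      have h1' : σ k + (σ (k + c) - σ k) = σ (k + c) := by ring
      rw [h1', hσ, hσ]
      ring
    · intro c _
      rw [hσ k]
      have h1' : k + (σ (σ k + c) - k) = σ (σ k + c) := by ring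
      rw [h1', hσ]
      ring
    · intro c _; rfl
  have hN : ∀ k : ZMod p, ∑ c ∈ Ω, δ (k + c) = (n : ZMod p) * δ k := by
    intro k
    have e1 := hsum_perm (k + 1)
    have e2 := hsum_perm k
    have e3 : ∀ c ∈ Ω, δ (k + c) = (σ ((k+1) + c) - σ (k+1)) - (σ (k + c) - σ k) + δ k := by
      intro c _
      have harg : k + 1 + c = k + c + 1 := by ring
      simp only [hδdef]
      rw [harg]
      ring
    rw [Finset.sum_congr rfl e3, Finset.sum_add_distrib, Finset.sum_sub_distrib, e1, e2,
      Finset.sum_const, nsmul_eq_mul]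
    ring
  -- weights
  set w : ℕ → ZMod p := fun j => ∑ c ∈ Ω, (Nat.choose (ZMod.val c) j : ZMod p) with hw
  -- (REL)
  have hREL : ∀ k : ZMod p, ∑ j ∈ Finset.Ico 1 p, w j * ((Dl p ^ j) δ) k = 0 := by
    intro k
    have expand : ∀ c ∈ Ω, δ (k + c)
        = ∑ j ∈ range p, (Nat.choose (ZMod.val c) j : ZMod p) * ((Dl p ^ j) δ) k := by
      intro c _
      have hc : ((ZMod.val c : ℕ) : ZMod p) = c := ZMod.natCast_rightInverse c
      have h := shift_eq_sum_choose δ (ZMod.val c) k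
      rw [hc] at h
      rw [h]
      apply Finset.sum_subset
      · exact Finset.range_subset_range.mpr (by have := ZMod.val_lt c; omega)
      · intro j _ hj
        have : ZMod.val c < j := by
          have h' := Finset.mem_range.not.mp hj
          omega
        rw [Nat.choose_eq_zero_of_lt this]
        simp
    have h2 : ∑ c ∈ Ω, δ (k + c)
        = ∑ j ∈ range p, w j * ((Dl p ^ j) δ) k := by
      rw [Finset.sum_congr rfl expand, Finset.sum_comm]
      apply Finset.sum_congr rfl
      intro j _
      rw [hw, Finset.sum_mul]
    have h3 : ∑ j ∈ range p, w j * ((Dl p ^ j) δ) k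
        = w 0 * δ k + ∑ j ∈ Finset.Ico 1 p, w j * ((Dl p ^ j) δ) k := by
      rw [Finset.range_eq_Ico, Finset.sum_eq_sum_Ico_succ_bot hp.pos]
      rw [pow_zero, Module.End.one_apply]
    have hw0 : w 0 = (n : ZMod p) := by
      simp [hw, hn]
    have h4 : (n : ZMod p) * δ k
        = (n : ZMod p) * δ k + ∑ j ∈ Finset.Ico 1 p, w j * ((Dl p ^ j) δ) k := by
      calc (n : ZMod p) * δ k = ∑ c ∈ Ω, δ (k + c) := (hN k).symm
        _ = ∑ j ∈ range p, w j * ((Dl p ^ j) δ) k := h2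
        _ = w 0 * δ k + ∑ j ∈ Finset.Ico 1 p, w j * ((Dl p ^ j) δ) k := h3
        _ = (n : ZMod p) * δ k + ∑ j ∈ Finset.Ico 1 p, w j * ((Dl p ^ j) δ) k := by rw [hw0]
    linear_combination -h4
  -- (P3): some weight in [1, n] is nonzero
  have hP3 : ∃ j, (1 ≤ j ∧ j ≤ n) ∧ w j ≠ 0 := by
    by_contra hcon
    push_neg at hcon
    -- the vanishing polynomial of Ω
    set f₀ : Polynomial (ZMod p) := ∏ c ∈ Ω, (Polynomial.X - Polynomial.C c) with hf₀
    have hdeg : f₀.natDegree ≤ n := by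
      refine le_trans (Polynomial.natDegree_prod_le _ _) ?_
      have : ∀ c ∈ Ω, (Polynomial.X - Polynomial.C c).natDegree = 1 := by
        intro c _; exact Polynomial.natDegree_X_sub_C c
      rw [Finset.sum_congr rfl this]
      simp [hn]
    have hkill : (Dl p ^ (n + 1)) (fun x => f₀.eval x) = 0 :=
      Dl_pow_poly f₀ (by omega)
    have hnewton := newton (fun x => f₀.eval x) (n + 1) hkill
    have hzero : ∀ c ∈ Ω, f₀.eval c = 0 := by
      intro c hc
      rw [hf₀, Polynomial.eval_prod]
      exact Finset.prod_eq_zero hc (by simp)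
    have hsum0 : ∑ c ∈ Ω, f₀.eval c = 0 := Finset.sum_eq_zero hzero
    have hswap : ∑ c ∈ Ω, f₀.eval c
        = ∑ j ∈ range (n + 1), ((Dl p ^ j) (fun x => f₀.eval x) 0) * w j := by
      rw [Finset.sum_congr rfl (fun c _ => hnewton c), Finset.sum_comm]
      apply Finset.sum_congr rfl
      intro j _
      rw [hw, Finset.mul_sum]
    have hone : ∑ j ∈ range (n + 1), ((Dl p ^ j) (fun x => f₀.eval x) 0) * w j
        = f₀.eval 0 * (n : ZMod p) := by
      rw [Finset.sum_eq_single 0]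
      · rw [pow_zero, Module.End.one_apply]
        congr 1
        simp [hw, hn]
      · intro j hj hj0
        rw [hcon j ⟨by omega, by have := Finset.mem_range.mp hj; omega⟩, mul_zero]
      · intro habs; exact absurd (Finset.mem_range.mpr (by omega)) habs
    have heval0 : f₀.eval 0 ≠ 0 := by
      rw [hf₀, Polynomial.eval_prod]
      rw [Finset.prod_ne_zero_iff]
      intro c hc
      simp only [Polynomial.eval_sub, Polynomial.eval_X, Polynomial.eval_C]
      intro hzero'
      apply h0
      have : c = 0 := by linear_combination -hzero'
      rwa [this] at hc
    rw [hswap, hone] at hsum0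
    exact (mul_ne_zero heval0 hnz) hsum0
  -- least such index r
  classical
  set r : ℕ := Nat.find hP3 with hr
  have hrspec := Nat.find_spec hP3
  obtain ⟨⟨hr1, hrn⟩, hwr⟩ : ((1 ≤ r ∧ r ≤ n) ∧ w r ≠ 0) := hrspec
  have hrmin : ∀ j, 1 ≤ j → j < r → w j = 0 := by
    intro j hj1 hjr
    by_contra hwj
    rcases le_or_gt j n with hjn | hjn
    · have hle : r ≤ j := Nat.find_le (show (1 ≤ j ∧ j ≤ n) ∧ w j ≠ 0 from ⟨⟨hj1, hjn⟩, hwj⟩)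
      omega
    · -- j ≤ r - 1 ≤ n - 1 < n < j, contradiction
      omega
  -- downward induction: Dl^m δ = 0 for all m ≥ r
  have hdesc : ∀ s m, r ≤ m → p ≤ m + s → (Dl p ^ m) δ = 0 := by
    intro s
    induction s with
    | zero =>
      intro m _ hm
      exact Dl_pow_eq_zero_of_le (Dl_pow_p δ) (by omega)
    | succ s ih =>
      intro m hrm hms
      rcases le_or_gt p (m + s) with hc | hc
      · exact ih m hrm hc
      -- apply Dl^(m-r) to hREL
      have hRELfun : ∑ j ∈ Finset.Ico 1 p, w j • ((Dl p ^ j) δ) = 0 := by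
        funext k
        rw [Finset.sum_apply]
        have := hREL k
        simpa [smul_eq_mul] using this
      have happ : ∑ j ∈ Finset.Ico 1 p, w j • ((Dl p ^ (m - r + j)) δ) = 0 := by
        have := congrArg (fun g => (Dl p ^ (m - r)) g) hRELfun
        simp only [map_zero] at this
        rw [map_sum] at this
        rw [← this]
        apply Finset.sum_congr rfl
        intro j _
        rw [map_smul]
        congr 1
        rw [← Module.End.mul_apply, ← pow_add]
      have hsingle : ∑ j ∈ Finset.Ico 1 p, w j • ((Dl p ^ (m - r + j)) δ)
          = w r • ((Dl p ^ m) δ) := by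
        rw [Finset.sum_eq_single r]
        · have hmr : m - r + r = m := by omega
          rw [hmr]
        · intro j hj hjr
          rcases lt_or_gt_of_ne hjr with hlt | hgt
          · rw [hrmin j (Finset.mem_Ico.mp hj).1 hlt, zero_smul]
          · have hz : (Dl p ^ (m - r + j)) δ = 0 :=
              ih (m - r + j) (by omega) (by omega)
            rw [hz, smul_zero]
        · intro habs
          exact absurd (Finset.mem_Ico.mpr ⟨hr1, by omega⟩) habs
      rw [hsingle] at happ
      exact (smul_eq_zero.mp happ).resolve_left hwr
  have hDr : (Dl p ^ r) δ = 0 := hdesc p r le_rfl (by omega)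
  -- pigeonhole: δ is not injective
  have hpigeon : ∃ a b : ZMod p, a ≠ b ∧ δ a = δ b := by
    have hmaps : ∀ a ∈ (Finset.univ : Finset (ZMod p)), δ a ∈ Ω := fun a _ => hδ a
    have hcard : Ω.card < (Finset.univ : Finset (ZMod p)).card := by
      rw [Finset.card_univ, prime_card_zmod]; omega
    obtain ⟨a, _, b, _, hab, habeq⟩ :=
      Finset.exists_ne_map_eq_of_card_lt_of_maps_to hcard hmaps
    exact ⟨a, b, hab, habeq⟩
  obtain ⟨a, b, hab, habδ⟩ := hpigeon
  -- the function U
  set U : ZMod p → ZMod p := fun x => (σ (a + x) - σ a) - (σ (b + x) - σ b) with hU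
  have hUzero : ∀ c ∈ insert (0 : ZMod p) Ω, U c = 0 := by
    intro c hc
    rcases Finset.mem_insert.mp hc with rfl | hc
    · simp [hU]
    · have := hpair a b habδ c hc
      simp [hU, this]
  have hDU : Dl p U = fun x => δ (a + x) - δ (b + x) := by
    funext x
    rw [Dl_apply]
    simp only [hU, hδdef]
    rw [show a + (x + 1) = a + x + 1 by ring, show b + (x + 1) = b + x + 1 by ring]
    ring
  have hshift : ∀ (t : ℕ) (e : ZMod p) (f : ZMod p → ZMod p),
      (Dl p ^ t) (fun x => f (e + x)) = fun x => ((Dl p ^ t) f) (e + x) := by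
    intro t
    induction t with
    | zero => intro e f; simp
    | succ t ih =>
      intro e f
      rw [Dl_pow_succ', Dl_pow_succ']
      have : Dl p (fun x => f (e + x)) = fun x => (Dl p f) (e + x) := by
        funext x
        rw [Dl_apply, Dl_apply]
        rw [show e + (x + 1) = (e + x) + 1 by ring]
      rw [this, ih e (Dl p f)]
  have hDrU : (Dl p ^ (r + 1)) U = 0 := by
    rw [Dl_pow_succ', hDU]
    have hsplit : (fun x => δ (a + x) - δ (b + x))
        = (fun x => δ (a + x)) - (fun x => δ (b + x)) := rfl
    rw [hsplit, map_sub, hshift r a δ, hshift r b δ, hDr]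
    funext x
    simp
  -- build the interpolating polynomial
  set P : Polynomial (ZMod p) :=
    ∑ j ∈ range (r + 1), Polynomial.C ((Dl p ^ j) U 0) * Bpoly p j with hP
  have hPeval : ∀ x, P.eval x = U x := by
    intro x
    rw [hP, Polynomial.eval_finset_sum]
    have : ∀ j ∈ range (r + 1), (Polynomial.C ((Dl p ^ j) U 0) * Bpoly p j).eval x
        = ((Dl p ^ j) U 0) * (Nat.choose x.val j : ZMod p) := by
      intro j hj
      rw [Polynomial.eval_mul, Polynomial.eval_C, Bpoly_eval j (by have := Finset.mem_range.mp hj; omega) x]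
    rw [Finset.sum_congr rfl this]
    exact (newton U (r + 1) hDrU x).symm
  have hPdeg : P.natDegree ≤ n := by
    rw [hP]
    apply Polynomial.natDegree_sum_le_of_forall_le
    intro j hj
    refine le_trans (Polynomial.natDegree_mul_le) ?_
    rw [Polynomial.natDegree_C, zero_add]
    refine le_trans (Bpoly_natDegree_le j) ?_
    have := Finset.mem_range.mp hj
    omega
  have hPzero : P = 0 := by
    have hcard : P.natDegree < Fintype.card ↥(insert (0 : ZMod p) Ω) := by
      rw [Fintype.card_coe, Finset.card_insert_of_notMem h0]
      omega
    refine Polynomial.eq_zero_of_natDegree_lt_card_of_eval_eq_zero P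
      (Subtype.val_injective (p := fun x => x ∈ insert (0 : ZMod p) Ω)) ?_ hcard
    intro c
    rw [hPeval]
    exact hUzero c.1 c.2
  have hUall : ∀ x, U x = 0 := by
    intro x
    rw [← hPeval x, hPzero]
    simp
  -- δ is (b - a)-periodic
  have hper : ∀ y : ZMod p, δ (y + (b - a)) = δ y := by
    intro y
    have h1' := hUall (y - a)
    have h2' := hUall (y - a + 1)
    have e1' : a + (y - a) = y := by ring
    have e2' : b + (y - a) = y + (b - a) := by ring
    have e3' : a + (y - a + 1) = y + 1 := by ring
    have e4' : b + (y - a + 1) = y + (b - a) + 1 := by ring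
    simp only [hU, e1', e2', e3', e4'] at h1' h2'
    simp only [hδdef]
    linear_combination h1' - h2'
  -- conclude: δ constant
  have hstep : ∀ (t : ℕ) (y : ZMod p), δ (y + (t : ZMod p) * (b - a)) = δ y := by
    intro t
    induction t with
    | zero => intro y; simp
    | succ t ih =>
      intro y
      have : y + ((t + 1 : ℕ) : ZMod p) * (b - a) = (y + (t : ZMod p) * (b - a)) + (b - a) := by
        push_cast; ring
      rw [this, hper, ih]
  intro k
  have hd : (b - a) ≠ 0 := sub_ne_zero.mpr (Ne.symm hab)
  set t : ℕ := (k * (b - a)⁻¹).val with ht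
  have : (0 : ZMod p) + (t : ZMod p) * (b - a) = k := by
    rw [ht, ZMod.natCast_rightInverse, zero_add, mul_assoc, inv_mul_cancel₀ hd, mul_one]
  calc δ k = δ ((0 : ZMod p) + (t : ZMod p) * (b - a)) := by rw [this]
    _ = δ 0 := hstep t 0


end CMAux



/-- A Cayley map `CM(G, X, q)`: a finite subset `X` of `G` with `1 ∉ X`,
closed under inverses, generating `G`, together with a permutation `q` of `X`
acting on `X` as a single cycle of length `|X|`. -/
structure CayleyMapData (G : Type*) [Group G] where
  X : Finset G
  one_not_mem : (1 : G) ∉ X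
  inv_mem : ∀ x ∈ X, x⁻¹ ∈ X
  gen : Subgroup.closure (X : Set G) = ⊤
  q : Equiv.Perm {x : G // x ∈ X}
  single_cycle : ∀ x y : {x : G // x ∈ X}, ∃ k : ℕ, (q ^ k) x = y

namespace CayleyMapData

variable {G : Type*} [Group G] (M : CayleyMapData G)

/-- The rotation `R(g, x) = (g, q(x))` on the arc set `G × X`. -/
def rotation : Equiv.Perm (G × {x : G // x ∈ M.X}) :=
  (Equiv.refl G).prodCongr M.q

/-- The arc-reversing involution `L(g, x) = (g·x, x⁻¹)` on the arc set `G × X`. -/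
def invol : Equiv.Perm (G × {x : G // x ∈ M.X}) where
  toFun d := (d.1 * d.2.1, ⟨(d.2.1 : G)⁻¹, M.inv_mem _ d.2.2⟩)
  invFun d := (d.1 * d.2.1, ⟨(d.2.1 : G)⁻¹, M.inv_mem _ d.2.2⟩)
  left_inv := by rintro ⟨g, x, hx⟩; simp
  right_inv := by rintro ⟨g, x, hx⟩; simp

/-- The Cayley map is regular: the monodromy group `⟨R, L⟩` acts sharply
transitively on the arc set. -/
def IsRegular : Prop :=
  ∀ d d' : G × {x : G // x ∈ M.X},
    ∃! m : Subgroup.closure ({M.rotation, M.invol} :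
        Set (Equiv.Perm (G × {x : G // x ∈ M.X}))),
      (m : Equiv.Perm (G × {x : G // x ∈ M.X})) d = d'

/-- Balanced: `(q x)⁻¹ = q (x⁻¹)` for all `x ∈ X`. -/
def IsBalanced : Prop :=
  ∀ x : {x : G // x ∈ M.X},
    ((M.q x : G))⁻¹ = (M.q ⟨(x : G)⁻¹, M.inv_mem _ x.2⟩ : G)

/-- Anti-balanced: `(q x)⁻¹ = q⁻¹ (x⁻¹)` for all `x ∈ X`. -/
def IsAntiBalanced : Prop :=
  ∀ x : {x : G // x ∈ M.X},
    ((M.q x : G))⁻¹ = (M.q⁻¹ ⟨(x : G)⁻¹, M.inv_mem _ x.2⟩ : G)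

end CayleyMapData

/-- Every `p`-valent regular Cayley map on a finite abelian group is either
balanced or anti-balanced. -/
theorem prime_valent_regular_cayley_map_abelian_balanced_or_antibalanced
    {G : Type*} [CommGroup G] [Fintype G] (p : ℕ) (hp : p.Prime)
    (M : CayleyMapData G) (hval : M.X.card = p) (hreg : M.IsRegular) :
    M.IsBalanced ∨ M.IsAntiBalanced := by
  classical
  haveI hFact : Fact (Nat.Prime p) := ⟨hp⟩
  haveI : NeZero p := ⟨hp.ne_zero⟩
  haveI : Fact (1 < p) := ⟨hp.one_lt⟩
  have hcard : Fintype.card {x : G // x ∈ M.X} = p := by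
    rw [Fintype.card_coe]; exact hval
  obtain ⟨x₀⟩ : Nonempty {x : G // x ∈ M.X} := by
    rw [← Fintype.card_pos_iff, hcard]; exact hp.pos
  -- ### Part A : the rotation is a `p`-cycle
  have hfixpow : ∀ (x : {x : G // x ∈ M.X}) (k : ℕ), M.q x = x → (M.q ^ k) x = x := by
    intro x k hx
    induction k with
    | zero => simp
    | succ k ih => rw [pow_succ, Equiv.Perm.mul_apply, hx, ih]
  have hmoved : ∃ x : {x : G // x ∈ M.X}, M.q x ≠ x := by
    by_contra hfix
    push_neg at hfix
    obtain ⟨x, y, hxy⟩ : ∃ x y : {x : G // x ∈ M.X}, x ≠ y :=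
      Fintype.exists_pair_of_one_lt_card (by rw [hcard]; exact hp.one_lt)
    obtain ⟨k, hk⟩ := M.single_cycle x y
    rw [hfixpow x k (hfix x)] at hk
    exact hxy hk
  have hcycle : M.q.IsCycle := by
    obtain ⟨x₁, hx₁⟩ := hmoved
    refine ⟨x₁, hx₁, ?_⟩
    intro y _
    obtain ⟨k, hk⟩ := M.single_cycle x₁ y
    exact ⟨(k : ℤ), by rw [zpow_natCast]; exact hk⟩
  have hsupp : M.q.support = Finset.univ := by
    rw [Finset.eq_univ_iff_forall]
    intro y
    rw [Equiv.Perm.mem_support]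
    intro hy
    obtain ⟨x₁, hx₁⟩ := hmoved
    obtain ⟨k, hk⟩ := M.single_cycle y x₁
    rw [hfixpow y k hy] at hk
    rw [hk] at hy
    exact hx₁ hy
  have horder : orderOf M.q = p := by
    rw [hcycle.orderOf, hsupp, Finset.card_univ, hcard]
  have hqmod : ∀ a b : ℕ, (a : ZMod p) = (b : ZMod p) → M.q ^ a = M.q ^ b := by
    intro a b hab
    rw [pow_eq_pow_iff_modEq, horder]
    exact (ZMod.natCast_eq_natCast_iff a b p).mp hab
  -- ### Part B : coordinates on `X`
  set E : ZMod p → {x : G // x ∈ M.X} := fun k => (M.q ^ k.val) x₀ with hE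
  have hEpow : ∀ (k : ZMod p) (j : ℕ), (M.q ^ j) (E k) = E (k + (j : ZMod p)) := by
    intro k j
    have hcast : ((j + k.val : ℕ) : ZMod p) = (((k + (j : ZMod p)).val : ℕ) : ZMod p) := by
      rw [ZMod.natCast_rightInverse (k + (j : ZMod p))]
      push_cast
      rw [ZMod.natCast_rightInverse k]
      ring
    show (M.q ^ j) ((M.q ^ k.val) x₀) = (M.q ^ (k + (j : ZMod p)).val) x₀
    rw [← Equiv.Perm.mul_apply, ← pow_add, hqmod _ _ hcast]
  have hE0 : E 0 = x₀ := by
    show (M.q ^ (0 : ZMod p).val) x₀ = x₀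
    rw [ZMod.val_zero, pow_zero, Equiv.Perm.one_apply]
  have hEsurj : Function.Surjective E := by
    intro y
    obtain ⟨k, hk⟩ := M.single_cycle x₀ y
    refine ⟨(k : ZMod p), ?_⟩
    have h := hEpow 0 k
    rw [hE0, zero_add] at h
    rw [← h, hk]
  have hEbij : Function.Bijective E :=
    (Fintype.bijective_iff_surjective_and_card E).mpr ⟨hEsurj, by rw [ZMod.card, hcard]⟩
  set Ee : ZMod p ≃ {x : G // x ∈ M.X} := Equiv.ofBijective E hEbij with hEe
  set ι : {x : G // x ∈ M.X} → {x : G // x ∈ M.X} :=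
    fun x => ⟨(x : G)⁻¹, M.inv_mem _ x.2⟩ with hι
  have hιι : ∀ x, ι (ι x) = x := by
    intro x; rw [hι]; exact Subtype.ext (inv_inv _)
  set σ : ZMod p → ZMod p := fun k => Ee.symm (ι (E k)) with hσdef
  have hEσ : ∀ k, E (σ k) = ι (E k) := by
    intro k
    show Ee (Ee.symm (ι (E k))) = ι (E k)
    exact Ee.apply_symm_apply _
  have hσσ : ∀ k, σ (σ k) = k := by
    intro k
    apply hEbij.1
    rw [hEσ, hEσ, hιι]
  set v : ZMod p → G := fun k => ((E k : G)) with hv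
  have hvσ : ∀ k, v (σ k) = (v k)⁻¹ := by
    intro k
    show ((E (σ k) : G)) = ((E k : G))⁻¹
    rw [hEσ]
  -- ### Part C : the map automorphism Φ from regularity
  set R : Equiv.Perm (G × {x : G // x ∈ M.X}) := M.rotation with hR
  set L : Equiv.Perm (G × {x : G // x ∈ M.X}) := M.invol with hL
  have hRmem : R ∈ Subgroup.closure ({M.rotation, M.invol} :
      Set (Equiv.Perm (G × {x : G // x ∈ M.X}))) :=
    Subgroup.subset_closure (by rw [hR]; exact Set.mem_insert _ _)
  have hLmem : L ∈ Subgroup.closure ({M.rotation, M.invol} :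
      Set (Equiv.Perm (G × {x : G // x ∈ M.X}))) :=
    Subgroup.subset_closure (by rw [hL]; exact Set.mem_insert_of_mem _ rfl)
  set d₀ : G × {x : G // x ∈ M.X} := (1, E 0) with hd₀
  have huniq : ∀ (m m' : Subgroup.closure ({M.rotation, M.invol} :
      Set (Equiv.Perm (G × {x : G // x ∈ M.X})))) (d : G × {x : G // x ∈ M.X}),
      (m : Equiv.Perm _) d₀ = d → (m' : Equiv.Perm _) d₀ = d → m = m' := by
    intro m m' d hm hm'
    obtain ⟨u, _, huu⟩ := hreg d₀ d
    rw [huu m hm, huu m' hm']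
  choose nn hnn using fun d => (hreg d₀ d).exists
  set Φ : (G × {x : G // x ∈ M.X}) → (G × {x : G // x ∈ M.X}) :=
    fun d => (nn d : Equiv.Perm _) (R d₀) with hΦ
  have hΦcomm : ∀ (m : Subgroup.closure ({M.rotation, M.invol} :
      Set (Equiv.Perm (G × {x : G // x ∈ M.X})))) (d : G × {x : G // x ∈ M.X}),
      Φ ((m : Equiv.Perm _) d) = (m : Equiv.Perm _) (Φ d) := by
    intro m d
    have h1 : nn ((m : Equiv.Perm _) d) = m * nn d := by
      apply huniq _ _ ((m : Equiv.Perm _) d) (hnn _)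
      rw [Subgroup.coe_mul, Equiv.Perm.mul_apply, hnn d]
    rw [hΦ]
    simp only [h1, Subgroup.coe_mul, Equiv.Perm.mul_apply]
  have hΦd₀ : Φ d₀ = R d₀ := by
    have h1 : nn d₀ = 1 := by
      apply huniq _ _ d₀ (hnn d₀)
      rw [OneMemClass.coe_one, Equiv.Perm.one_apply]
    rw [hΦ]
    simp only [h1, OneMemClass.coe_one, Equiv.Perm.one_apply]
  have hRapp : ∀ (g : G) (x : {x : G // x ∈ M.X}), R (g, x) = (g, M.q x) := by
    intro g x; rfl
  have hRpow : ∀ (j : ℕ) (g : G) (x : {x : G // x ∈ M.X}),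
      (R ^ j) (g, x) = (g, (M.q ^ j) x) := by
    intro j
    induction j with
    | zero => intro g x; simp
    | succ j ih =>
      intro g x
      rw [pow_succ, Equiv.Perm.mul_apply, hRapp, ih, pow_succ, Equiv.Perm.mul_apply]
  have hLapp : ∀ (g : G) (x : {x : G // x ∈ M.X}), L (g, x) = (g * (x : G), ι x) := by
    intro g x; rfl
  -- ### Part D : structure of Φ
  set φg : G → G := fun g => (Φ (g, E 0)).1 with hφg
  set J : G → ZMod p := fun g => Ee.symm (Φ (g, E 0)).2 with hJdef
  have hΦ0 : ∀ g : G, Φ (g, E 0) = (φg g, E (J g)) := by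
    intro g
    refine Prod.ext rfl ?_
    show (Φ (g, E 0)).2 = Ee (Ee.symm (Φ (g, E 0)).2)
    rw [Ee.apply_symm_apply]
  have hΦeq : ∀ (g : G) (k : ZMod p), Φ (g, E k) = (φg g, E (k + J g)) := by
    intro g k
    have h1 : (g, E k) = (R ^ k.val) (g, E 0) := by
      rw [hRpow, hEpow 0 k.val, zero_add, ZMod.natCast_rightInverse k]
    have h2 : Φ ((R ^ k.val) (g, E 0)) = (R ^ k.val) (Φ (g, E 0)) := by
      have := hΦcomm (⟨R, hRmem⟩ ^ k.val) (g, E 0)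
      rwa [SubgroupClass.coe_pow] at this
    rw [h1, h2, hΦ0, hRpow, hEpow (J g) k.val, ZMod.natCast_rightInverse k, add_comm]
  have hJ1 : J 1 = 1 ∧ φg 1 = 1 := by
    have h1 : Φ (1, E 0) = (1, E 1) := by
      have h2 : Φ d₀ = R d₀ := hΦd₀
      rw [hd₀, hRapp] at h2
      have h3 : M.q (E 0) = E 1 := by
        have := hEpow 0 1
        rw [pow_one, zero_add, Nat.cast_one] at this
        exact this
      rw [h3] at h2
      exact h2
    have h4 := hΦ0 1
    rw [h1] at h4
    constructor
    · have h5 : E 1 = E (J 1) := congrArg Prod.snd h4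
      have := hEbij.1 h5
      exact this.symm
    · exact (congrArg Prod.fst h4).symm
  have hG2 : ∀ (g : G) (k : ZMod p), J (g * v k) = σ (k + J g) - σ k := by
    intro g k
    have hcomm := hΦcomm ⟨L, hLmem⟩ (g, E k)
    simp only [Subtype.coe_mk] at hcomm
    rw [hLapp g (E k)] at hcomm
    have hιE : ι (E k) = E (σ k) := (hEσ k).symm
    rw [hιE] at hcomm
    rw [hΦeq (g * (E k : G)) (σ k), hΦeq g k, hLapp, ← hEσ (k + J g)] at hcomm
    have h2 : E (σ k + J (g * (E k : G))) = E (σ (k + J g)) := congrArg Prod.snd hcomm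
    have h3 := hEbij.1 h2
    have h4 : (v k : G) = ((E k : G)) := rfl
    rw [h4]
    linear_combination h3
  have hJv : ∀ k : ZMod p, J (v k) = σ (k + 1) - σ k := by
    intro k
    have := hG2 1 k
    rw [one_mul, hJ1.1] at this
    exact this
  -- ### Part E : monoid generation and the set Ω
  have hsubm : Submonoid.closure (M.X : Set G) = ⊤ := by
    have h1 : ((M.X : Set G) ∪ (M.X : Set G)⁻¹) = (M.X : Set G) := by
      apply Set.union_eq_self_of_subset_right
      intro x hx
      rw [Set.mem_inv] at hx
      have h2 := M.inv_mem _ hx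
      simpa using h2
    have h2 := Subgroup.closure_toSubmonoid (M.X : Set G)
    rw [M.gen, h1] at h2
    rw [← h2, Subgroup.top_toSubmonoid]
  have hvX : ∀ x ∈ M.X, ∃ k : ZMod p, v k = x := by
    intro x hx
    obtain ⟨k, hk⟩ := hEsurj ⟨x, hx⟩
    exact ⟨k, by show ((E k : G)) = x; rw [hk]⟩
  have hind : ∀ Q : G → Prop, Q 1 → (∀ (g : G) (k : ZMod p), Q g → Q (g * v k)) →
      ∀ g, Q g := by
    intro Q hQ1 hstep g
    have key : ∀ h : G, ∀ g', Q g' → Q (g' * h) := by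
      intro h
      have hmem : h ∈ Submonoid.closure (M.X : Set G) := by rw [hsubm]; trivial
      induction hmem using Submonoid.closure_induction with
      | mem x hx =>
        intro g' hg'
        obtain ⟨k, hk⟩ := hvX x hx
        rw [← hk]
        exact hstep g' k hg'
      | one => intro g' hg'; simpa using hg'
      | mul a b ha hb hia hib =>
        intro g' hg'
        rw [← mul_assoc]
        exact hib _ (hia _ hg')
    have h2 := key g 1 hQ1
    simpa using h2
  set Ω : Finset (ZMod p) := Finset.image J Finset.univ with hΩ
  have hJmem : ∀ g, J g ∈ Ω := fun g => Finset.mem_image.mpr ⟨g, Finset.mem_univ _, rfl⟩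
  have h1Ω : (1 : ZMod p) ∈ Ω := by
    have := hJmem 1
    rwa [hJ1.1] at this
  have h0Ω : (0 : ZMod p) ∉ Ω := by
    intro hmem
    obtain ⟨g, _, hg⟩ := Finset.mem_image.mp hmem
    have hzero : ∀ h, J (g * h) = 0 := by
      apply hind (fun h => J (g * h) = 0)
      · rwa [mul_one]
      · intro h k hh
        rw [← mul_assoc, hG2 (g * h) k, hh, add_zero, sub_self]
    have h1' := hzero g⁻¹
    rw [mul_inv_cancel, hJ1.1] at h1'
    exact one_ne_zero h1'
  have hclΩ : ∀ k : ZMod p, ∀ c ∈ Ω, σ (k + c) - σ k ∈ Ω := by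
    intro k c hc
    obtain ⟨g, _, rfl⟩ := Finset.mem_image.mp hc
    rw [← hG2 g k]
    exact hJmem _
  have hδΩ : ∀ k : ZMod p, σ (k + 1) - σ k ∈ Ω := by
    intro k
    rw [← hJv k]
    exact hJmem _
  have hpair : ∀ a b : ZMod p, σ (a + 1) - σ a = σ (b + 1) - σ b →
      ∀ c ∈ Ω, σ (a + c) - σ a = σ (b + c) - σ b := by
    intro a b hab c hc
    obtain ⟨g, _, rfl⟩ := Finset.mem_image.mp hc
    have hall : ∀ h, σ (a + J h) - σ a = σ (b + J h) - σ b := by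
      apply hind (fun h => σ (a + J h) - σ a = σ (b + J h) - σ b)
      · rw [hJ1.1]; exact hab
      · intro h k hQ
        have e1 : J (h * v k * v a) = σ (a + J (h * v k)) - σ a := hG2 (h * v k) a
        have e2 : J (h * v a * v k) = σ (k + J (h * v a)) - σ k := hG2 (h * v a) k
        have e3 : h * v k * v a = h * v a * v k := by
          rw [mul_assoc, mul_assoc, mul_comm (v k) (v a)]
        have e4 : J (h * v a) = σ (a + J h) - σ a := hG2 h a
        have f1 : J (h * v k * v b) = σ (b + J (h * v k)) - σ b := hG2 (h * v k) b
        have f2 : J (h * v b * v k) = σ (k + J (h * v b)) - σ k := hG2 (h * v b) k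
        have f3 : h * v k * v b = h * v b * v k := by
          rw [mul_assoc, mul_assoc, mul_comm (v k) (v b)]
        have f4 : J (h * v b) = σ (b + J h) - σ b := hG2 h b
        rw [e3, e2, e4, hQ] at e1
        rw [f3, f2, f4] at f1
        rw [← e1, ← f1]
    exact hall g
  -- ### Part F : apply the combinatorial core and conclude
  have hconst := CMAux.delta_const σ hσσ Ω h1Ω h0Ω hδΩ hclΩ hpair
  set c : ZMod p := σ (0 + 1) - σ 0 with hc
  have hstepσ : ∀ k, σ (k + 1) = σ k + c := by
    intro k
    have := hconst k
    linear_combination this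
  have haff : ∀ (m : ℕ) (k : ZMod p), σ (k + (m : ZMod p)) = σ k + (m : ZMod p) * c := by
    intro m
    induction m with
    | zero => intro k; simp
    | succ m ih =>
      intro k
      have h1' : k + ((m + 1 : ℕ) : ZMod p) = (k + (m : ZMod p)) + 1 := by push_cast; ring
      rw [h1', hstepσ, ih]
      push_cast
      ring
  have haff' : ∀ x : ZMod p, σ x = σ 0 + x * c := by
    intro x
    have h1' := haff x.val 0
    rw [ZMod.natCast_rightInverse x, zero_add] at h1'
    exact h1'
  have hc2 : c * c = 1 := by
    have e : ∀ x : ZMod p, σ 0 + (σ 0 + x * c) * c = x := by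
      intro x
      rw [← haff' x, ← haff' (σ x), hσσ]
    have e1 := e 1
    have e0 := e 0
    linear_combination e1 - e0
  rcases mul_self_eq_one_iff.mp hc2 with hcase | hcase
  · -- balanced
    left
    intro x
    obtain ⟨k, rfl⟩ := hEsurj x
    have hq1 : M.q (E k) = E (k + 1) := by
      have h1' := hEpow k 1
      rwa [pow_one, Nat.cast_one] at h1'
    have hq2 : M.q (E (σ k)) = E (σ k + 1) := by
      have h1' := hEpow (σ k) 1
      rwa [pow_one, Nat.cast_one] at h1'
    have hsub : (⟨((E k : G))⁻¹, M.inv_mem _ (E k).2⟩ : {x : G // x ∈ M.X}) = E (σ k) :=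
      (hEσ k).symm
    rw [hq1, hsub, hq2]
    show (v (k + 1))⁻¹ = v (σ k + 1)
    rw [← hvσ (k + 1)]
    congr 1
    rw [hstepσ k, hcase]
  · -- anti-balanced
    right
    intro x
    obtain ⟨k, rfl⟩ := hEsurj x
    have hq1 : M.q (E k) = E (k + 1) := by
      have h1' := hEpow k 1
      rwa [pow_one, Nat.cast_one] at h1'
    have hqinv : M.q⁻¹ (E (σ k)) = E (σ k - 1) := by
      have h1' : M.q (E (σ k - 1)) = E (σ k) := by
        have h2' := hEpow (σ k - 1) 1
        rw [pow_one, Nat.cast_one, sub_add_cancel] at h2'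
        exact h2'
      rw [← h1', Equiv.Perm.inv_def, Equiv.symm_apply_apply]
    have hsub : (⟨((E k : G))⁻¹, M.inv_mem _ (E k).2⟩ : {x : G // x ∈ M.X}) = E (σ k) :=
      (hEσ k).symm
    rw [hq1, hsub, hqinv]
    show (v (k + 1))⁻¹ = v (σ k - 1)
    rw [← hvσ (k + 1)]
    congr 1
    rw [hstepσ k, hcase]
    ring
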